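/- Fix b ≥ 2 and k ≥ 1. If there exists a k-oasis base b, then there exist infinitely many k-oases base b, i.e., infinitely many starting values c such that {c+1, ..., c+k} is a k-oasis base b. -/

import Mathlib

/-- The augmented generalized happy function: `c` plus the sum of squares of the base-`b`
digits of `a` (with the convention that it maps `0` to `c`). -/
def S (c b a : ℕ) : ℕ := c + ((Nat.digits b a).map (· ^ 2)).sum

lemma sumsq_step (b a : ℕ) (hb : 2 ≤ b) :
    ((Nat.digits b a).map (· ^ 2)).sum
      = (a % b) ^ 2 + ((Nat.digits b (a / b)).map (· ^ 2)).sum := by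
  rcases Nat.eq_zero_or_pos a with rfl | ha
  · simp
  · rw [Nat.digits_def' (by omega : 1 < b) ha]; simp

lemma sumsq_add_pow (b : ℕ) (hb : 2 ≤ b) :
    ∀ m a, a < b ^ m →
      ((Nat.digits b (a + b ^ m)).map (· ^ 2)).sum
        = ((Nat.digits b a).map (· ^ 2)).sum + 1 := by
  intro m
  induction m with
  | zero =>
    intro a ha
    simp only [pow_zero] at ha
    interval_cases a
    rw [Nat.digits_def' (by omega : 1 < b) (by norm_num)]
    simp [Nat.mod_eq_of_lt (by omega : 1 < b), Nat.div_eq_of_lt (by omega : 1 < b)]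
  | succ m ih =>
    intro a ha
    have hb0 : 0 < b := by omega
    have hpos : 0 < a + b ^ (m + 1) := by positivity
    rw [Nat.digits_def' (by omega : 1 < b) hpos]
    have hmod : (a + b ^ (m + 1)) % b = a % b := by
      rw [pow_succ, mul_comm, Nat.add_mul_mod_self_left]
    have hdiv : (a + b ^ (m + 1)) / b = a / b + b ^ m := by
      rw [pow_succ, Nat.add_mul_div_right _ _ hb0]
    have hlt : a / b < b ^ m := by
      rw [Nat.div_lt_iff_lt_mul hb0, ← pow_succ]; exact ha
    simp only [List.map_cons, List.sum_cons, hmod, hdiv, ih _ hlt]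
    rw [sumsq_step b a hb]
    ring

theorem stmt_7 (b k : ℕ) (hb : 2 ≤ b) (hk : 1 ≤ k)
    (h : ∃ c : ℕ, ∀ j, 1 ≤ j → j ≤ k → ∃ a : ℕ, 0 < a ∧ S (c + j) b a = a) :
    {c : ℕ | ∀ j, 1 ≤ j → j ≤ k → ∃ a : ℕ, 0 < a ∧ S (c + j) b a = a}.Infinite := by
  obtain ⟨c, hc⟩ := h
  apply Set.infinite_of_forall_exists_gt
  intro n
  -- choose witnesses
  have hA : ∀ j, ∃ a : ℕ, (1 ≤ j → j ≤ k → 0 < a ∧ S (c + j) b a = a) := by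
    intro j
    by_cases hj : 1 ≤ j ∧ j ≤ k
    · obtain ⟨a, ha⟩ := hc j hj.1 hj.2
      exact ⟨a, fun _ _ => ha⟩
    · exact ⟨1, fun h1 h2 => absurd ⟨h1, h2⟩ hj⟩
  choose A hA using hA
  set M : ℕ := (Finset.Icc 1 k).sup A + n + 1 with hM
  have h2M : M < 2 ^ M := Nat.lt_two_pow_self (n := M)
  have hbM : 2 ^ M ≤ b ^ M := Nat.pow_le_pow_left hb M
  refine ⟨c + (b ^ M - 1), ?_, by omega⟩
  intro j hj1 hj2
  obtain ⟨hpos, hfix⟩ := hA j hj1 hj2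
  have haM : A j < b ^ M := by
    have : A j ≤ (Finset.Icc 1 k).sup A :=
      Finset.le_sup (Finset.mem_Icc.mpr ⟨hj1, hj2⟩)
    omega
  refine ⟨A j + b ^ M, by positivity, ?_⟩
  have := sumsq_add_pow b hb M (A j) haM
  unfold S at hfix ⊢
  rw [this]
  omega
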